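/- arXiv:1901.00764 — 3 statements merged into one kernel-verified Lean document; each statement's English description precedes it below -/
import Mathlib

section
/- Let 0 < b1, b2 < 1, q = b1/b2, and k ≥ 1. Consider the stochastic six vertex occupation process g(t) started from a left-finite configuration g with finitely many particles, and the reversed k-particle location process y(t) started from y_1 > ... > y_k. If all particles of g lie strictly to the left of y_k (i.e., g_i = 0 for i ≥ y_k), then the one-step duality equation E^g[H(g(1), y)] = E^y[H(g, y(1))] holds with both sides computed from the functional H(g,y) = Π_{i=1}^k g_{y_i} q^{-N_{y_i}(g)}, where the left side is nonzero only on the event that the rightmost particle of g(1) lands exactly at y_k... In particular, if g has fewer than k particles, both sides equal 0. -/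
/-!  The stochastic six vertex model as an interacting particle system, in particle
location coordinates.  A configuration is a strictly increasing list of particle
locations in `ℤ` (finitely many particles).  The one-step update acts sequentially
from the left: a (non-displaced) particle stays with probability `b1` and otherwise
jumps right a geometric(`b2`) number of sites truncated by the position of the next
particle; a particle whose site has just been reached by the previous particle is
displaced and forced to jump (case (b) of the update rule). -/

/-- Probability that a particle jumps `n` sites right, given the displaced flag `disp`
and the gap `gap` to its right neighbor (`none` if there is no right neighbor). -/
noncomputable def jumpProb (b1 b2 : ℝ) (disp : Bool) (gap : Option ℤ) (n : ℤ) : ℝ :=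
  if disp then
    match gap with
    | none => if 1 ≤ n then (1 - b2) * b2 ^ (n - 1).toNat else 0
    | some d => if 1 ≤ n ∧ n < d then (1 - b2) * b2 ^ (n - 1).toNat
                else if n = d then b2 ^ (d - 1).toNat else 0
  else
    if n = 0 then b1
    else match gap with
      | none => if 1 ≤ n then (1 - b1) * (1 - b2) * b2 ^ (n - 1).toNat else 0
      | some d => if 1 ≤ n ∧ n < d then (1 - b1) * (1 - b2) * b2 ^ (n - 1).toNat
                  else if n = d then (1 - b1) * b2 ^ (d - 1).toNat else 0

/-- One-step transition probability of the S6V location process from the increasing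
list `x` of particle locations to the increasing list `z`, where `disp` records
whether the leftmost particle of `x` has just been displaced. -/
noncomputable def stepK (b1 b2 : ℝ) : Bool → List ℤ → List ℤ → ℝ
  | _, [], [] => 1
  | disp, a :: rest, z :: zrest =>
      jumpProb b1 b2 disp (rest.head?.map (fun nb => nb - a)) (z - a) *
        stepK b1 b2 (decide (rest.head? = some z)) rest zrest
  | _, _, _ => 0

/-- One-step transition probability of the reversed S6V location process acting on
decreasing lists (particles jump left): the mirror image of `stepK`. -/
noncomputable def revK (b1 b2 : ℝ) (y z : List ℤ) : ℝ :=
  stepK b1 b2 false ((y.map fun a => -a).reverse) ((z.map fun a => -a).reverse)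

/-- Schütz's duality functional in particle-location coordinates:
`H̃(x, y) = Π_i 1_{y_i ∈ x} q^{-#{j : x_j ≤ y_i}}`. -/
noncomputable def Hfun (q : ℝ) (x y : List ℤ) : ℝ :=
  (y.map fun yi =>
    (if yi ∈ x then (1 : ℝ) else 0) *
      q ^ (-(x.countP (fun xj => decide (xj ≤ yi)) : ℤ))).prod

section dev
variable {b1 b2 q : ℝ}

lemma jumpProb_some_cases {disp : Bool} {d n : ℤ} (h : jumpProb b1 b2 disp (some d) n ≠ 0) :
    n = 0 ∨ (1 ≤ n ∧ n < d) ∨ n = d := by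
  unfold jumpProb at h
  cases disp
  · simp only [Bool.false_eq_true, if_false] at h
    split_ifs at h with h0 h1 h2
    · exact Or.inl h0
    · exact Or.inr (Or.inl h1)
    · exact Or.inr (Or.inr h2)
    · exact absurd rfl h
  · simp only [if_true] at h
    split_ifs at h with h1 h2
    · exact Or.inr (Or.inl h1)
    · exact Or.inr (Or.inr h2)
    · exact absurd rfl h

lemma jumpProb_none_cases {disp : Bool} {n : ℤ} (h : jumpProb b1 b2 disp none n ≠ 0) :
    n = 0 ∨ 1 ≤ n := by
  unfold jumpProb at h
  cases disp
  · simp only [Bool.false_eq_true, if_false] at h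
    split_ifs at h with h0 h1
    · exact Or.inl h0
    · exact Or.inr h1
    · exact absurd rfl h
  · simp only [if_true] at h
    split_ifs at h with h1
    · exact Or.inr h1
    · exact absurd rfl h

lemma stepK_nil_left {disp : Bool} {z : ℤ} {zs : List ℤ} : stepK b1 b2 disp [] (z :: zs) = 0 := rfl
lemma stepK_nil_right {disp : Bool} {a : ℤ} {rest : List ℤ} : stepK b1 b2 disp (a :: rest) [] = 0 := rfl
lemma stepK_nil_nil {disp : Bool} : stepK b1 b2 disp [] [] = 1 := rfl
lemma stepK_cons {disp : Bool} {a z : ℤ} {rest zrest : List ℤ} :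
    stepK b1 b2 disp (a :: rest) (z :: zrest) =
      jumpProb b1 b2 disp (rest.head?.map (fun nb => nb - a)) (z - a) *
        stepK b1 b2 (decide (rest.head? = some z)) rest zrest := rfl

-- value lemmas
lemma jumpProb_false_zero {gap : Option ℤ} : jumpProb b1 b2 false gap 0 = b1 := by
  unfold jumpProb; simp

lemma jumpProb_true_some_zero {d : ℤ} (hd : 1 ≤ d) : jumpProb b1 b2 true (some d) 0 = 0 := by
  simp [jumpProb, show ¬((1:ℤ) ≤ 0 ∧ (0:ℤ) < d) by omega, show (0:ℤ) ≠ d by omega]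

lemma jumpProb_none_ge {disp : Bool} {n : ℤ} (hn : 1 ≤ n) :
    jumpProb b1 b2 disp none n =
      (if disp then 1 else (1 - b1)) * ((1 - b2) * b2 ^ (n - 1).toNat) := by
  cases disp
  · simp [jumpProb, hn, show n ≠ 0 by omega]; ring
  · simp [jumpProb, hn]

lemma jumpProb_some_mid {disp : Bool} {d n : ℤ} (h1 : 1 ≤ n) (h2 : n < d) :
    jumpProb b1 b2 disp (some d) n =
      (if disp then 1 else (1 - b1)) * ((1 - b2) * b2 ^ (n - 1).toNat) := by
  cases disp
  · simp [jumpProb, h1, h2, show n ≠ 0 by omega]; ring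
  · simp [jumpProb, h1, h2]

lemma jumpProb_some_top {disp : Bool} {d : ℤ} (hd : 1 ≤ d) :
    jumpProb b1 b2 disp (some d) d =
      (if disp then 1 else (1 - b1)) * b2 ^ (d - 1).toNat := by
  cases disp
  · simp [jumpProb, show ¬(d < d) by omega, show d ≠ 0 by omega]
  · simp [jumpProb, show ¬(d < d) by omega]

-- Hfun lemmas
lemma Hfun_single {x : List ℤ} {c : ℤ} :
    Hfun q x [c] = (if c ∈ x then (1:ℝ) else 0) *
      q ^ (-(x.countP (fun xj => decide (xj ≤ c)) : ℤ)) := by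
  unfold Hfun; simp

lemma Hfun_nil_single {c : ℤ} : Hfun q [] [c] = 0 := by
  rw [Hfun_single]; simp

lemma Hfun_singleton {z1 c : ℤ} : Hfun q [z1] [c] = if c = z1 then q⁻¹ else 0 := by
  rw [Hfun_single]
  by_cases h : c = z1
  · subst h
    simp [List.countP_cons, zpow_neg]
  · simp [List.countP_cons, h, Ne.symm h]

lemma Hfun_cons_lt (hq0 : q ≠ 0) {z1 c : ℤ} {zr : List ℤ} (h : z1 < c) :
    Hfun q (z1 :: zr) [c] = q⁻¹ * Hfun q zr [c] := by
  have hind : (if c ∈ z1 :: zr then (1:ℝ) else 0) = (if c ∈ zr then (1:ℝ) else 0) := by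
    by_cases hc : c ∈ zr
    · simp [hc]
    · have hne : c ≠ z1 := by omega
      simp [hc, hne]
  have hcount : (z1 :: zr).countP (fun xj => decide (xj ≤ c)) =
      zr.countP (fun xj => decide (xj ≤ c)) + 1 := by
    rw [List.countP_cons]; simp [h.le]
  rw [Hfun_single, Hfun_single, hind, hcount]
  push_cast
  rw [neg_add, zpow_add₀ hq0, zpow_neg_one]
  ring

lemma Hfun_mem {x w : List ℤ} (h : Hfun q x w ≠ 0) : ∀ a ∈ w, a ∈ x := by
  intro a ha
  by_contra hax
  apply h
  unfold Hfun
  apply List.prod_eq_zero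
  simp only [List.mem_map]
  exact ⟨a, ha, by simp [hax]⟩

-- structure of stepK support
lemma stepK_struct : ∀ {disp : Bool} {x z : List ℤ}, stepK b1 b2 disp x z ≠ 0 →
    z.length = x.length ∧ ∀ b ∈ z.dropLast, ∃ a ∈ x, b ≤ a := by
  intro disp x
  induction x generalizing disp with
  | nil =>
    intro z h
    cases z with
    | nil => simp
    | cons z1 zr => exact absurd stepK_nil_left h
  | cons a rest ih =>
    intro z h
    cases z with
    | nil => exact absurd stepK_nil_right h
    | cons z1 zr =>
      rw [stepK_cons] at h
      obtain ⟨hj, hs⟩ := mul_ne_zero_iff.mp h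
      obtain ⟨hlen, hmem⟩ := ih hs
      refine ⟨by simp [hlen], ?_⟩
      intro b hb
      cases zr with
      | nil => simp at hb
      | cons w ws =>
        have hrest : rest ≠ [] := by
          intro hr; rw [hr] at hlen; simp at hlen
        obtain ⟨r1, rs, rfl⟩ : ∃ r1 rs, rest = r1 :: rs := by
          cases rest with
          | nil => exact absurd rfl hrest
          | cons r1 rs => exact ⟨r1, rs, rfl⟩
        rw [List.dropLast_cons₂] at hb
        rcases List.mem_cons.mp hb with rfl | hb'
        · -- b = z1, gap is some (r1 - a)
          have hj' : jumpProb b1 b2 disp (some (r1 - a)) (b - a) ≠ 0 := by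
            simpa using hj
          rcases jumpProb_some_cases hj' with h0 | hmid | htop
          · exact ⟨a, by simp, by omega⟩
          · exact ⟨r1, by simp, by omega⟩
          · exact ⟨r1, by simp, by omega⟩
        · obtain ⟨a', ha', hba'⟩ := hmem b hb'
          exact ⟨a', by simp [ha'], hba'⟩

-- k ≥ 2 : LHS summand vanishes
lemma lhs_zero_of_two_le {x y : List ℤ} (hy : y.Chain' (· > ·)) (hk2 : 2 ≤ y.length)
    (hleft : ∀ a ∈ x, ∀ c ∈ y, a < c) (z : List ℤ) :
    stepK b1 b2 false x z * Hfun q z y = 0 := by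
  by_contra h
  obtain ⟨hs, hH⟩ := mul_ne_zero_iff.mp h
  obtain ⟨c1, c2, yr, rfl⟩ : ∃ c1 c2 yr, y = c1 :: c2 :: yr := by
    cases y with
    | nil => simp at hk2
    | cons c1 t =>
      cases t with
      | nil => simp at hk2
      | cons c2 yr => exact ⟨c1, c2, yr, rfl⟩
  have hc12 : c1 > c2 := (List.isChain_cons_cons.mp hy).1
  have hmemz := Hfun_mem hH
  have hc1z : c1 ∈ z := hmemz c1 (by simp)
  have hc2z : c2 ∈ z := hmemz c2 (by simp)
  have hznil : z ≠ [] := by rintro rfl; simp at hc1z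
  obtain ⟨_, hstruct⟩ := stepK_struct hs
  have key : ∀ cc, cc ∈ (c1 :: c2 :: yr) → cc ∈ z → cc = z.getLast hznil := by
    intro cc hcy hcz
    rw [← List.dropLast_append_getLast hznil] at hcz
    rcases List.mem_append.mp hcz with hdl | hlast
    · obtain ⟨a, ha, hca⟩ := hstruct cc hdl
      have := hleft a ha cc hcy
      omega
    · simpa using hlast
  have e1 := key c1 (by simp) hc1z
  have e2 := key c2 (by simp) hc2z
  omega

-- k ≥ 2 : RHS summand vanishes
lemma rhs_zero_of_two_le {x y : List ℤ} (hk2 : 2 ≤ y.length)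
    (hleft : ∀ a ∈ x, ∀ c ∈ y, a < c) (w : List ℤ) :
    revK b1 b2 y w * Hfun q x w = 0 := by
  by_contra h
  obtain ⟨hs, hH⟩ := mul_ne_zero_iff.mp h
  unfold revK at hs
  obtain ⟨hlen, hstruct⟩ := stepK_struct hs
  have hmemw := Hfun_mem hH
  have hvlen : ((w.map fun a => -a).reverse).length = y.length := by
    simpa using hlen
  have hdl : ((w.map fun a => -a).reverse).dropLast ≠ [] := by
    apply List.ne_nil_of_length_pos
    rw [List.length_dropLast, hvlen]
    omega
  obtain ⟨b, hb⟩ := List.exists_mem_of_ne_nil _ hdl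
  obtain ⟨a, ha, hba⟩ := hstruct b hb
  have hbw : -b ∈ w := by
    have hbv : b ∈ (w.map fun a => -a).reverse := List.dropLast_subset _ hb
    simp only [List.mem_reverse, List.mem_map] at hbv
    obtain ⟨a0, ha0, he⟩ := hbv
    have : -b = a0 := by omega
    rw [this]; exact ha0
  have hbx : -b ∈ x := hmemw _ hbw
  have hay : -a ∈ y := by
    simp only [List.mem_reverse, List.mem_map] at ha
    obtain ⟨c0, hc0, he⟩ := ha
    have : -a = c0 := by omega
    rw [this]; exact hc0
  have := hleft _ hbx _ hay
  omega

end dev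

/-- The closed-form sum `Σ_i b2^(c-x_i-1) q^(-i)` in recursive form. -/
noncomputable def Sf (q b2 : ℝ) (c : ℤ) : List ℤ → ℝ
  | [] => 0
  | a :: r => q⁻¹ * (b2 ^ ((c - a - 1).toNat) + Sf q b2 c r)

/-- Closed form for the one-point expectation with displaced flag. -/
noncomputable def Df (b1 b2 q : ℝ) (c : ℤ) (disp : Bool) : List ℤ → ℝ
  | [] => 0
  | a :: rest => q⁻¹ * ((if disp then 1 else (1 - b1)) * b2 ^ ((c - a - 1).toNat)
      + (1 - b1) * Sf q b2 c rest)

/-- Finite support set for the one-point LHS sum. -/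
noncomputable def FS (c : ℤ) : List ℤ → Finset (List ℤ)
  | [] => {[]}
  | a :: rest => ((Finset.Icc a c) ×ˢ (FS c rest)).image (fun p => p.1 :: p.2)

section dev2
variable {b1 b2 q : ℝ} {c : ℤ}

lemma Df_false (x : List ℤ) : Df b1 b2 q c false x = (1 - b1) * Sf q b2 c x := by
  cases x with
  | nil => simp [Df, Sf]
  | cons a r => simp only [Df, Sf, Bool.false_eq_true, if_false]; ring

lemma geom_aux : ∀ (m : ℕ),
    ∑ n ∈ Finset.Icc (1:ℤ) (m:ℤ), (1 - b2) * b2 ^ ((n - 1).toNat) = 1 - b2 ^ m := by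
  intro m
  induction m with
  | zero => simp
  | succ m ih =>
    have hins : Finset.Icc (1:ℤ) ((m:ℤ) + 1) = insert ((m:ℤ)+1) (Finset.Icc (1:ℤ) (m:ℤ)) := by
      ext n
      simp only [Finset.mem_Icc, Finset.mem_insert]
      omega
    have hnot : ((m:ℤ)+1) ∉ Finset.Icc (1:ℤ) (m:ℤ) := by
      simp only [Finset.mem_Icc]; omega
    push_cast
    rw [hins, Finset.sum_insert hnot, ih]
    have : ((m:ℤ) + 1 - 1).toNat = m := by omega
    rw [this]
    ring

lemma jumpProb_some_gt {disp : Bool} {d n : ℤ} (hd : 1 ≤ d) (h : d < n) :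
    jumpProb b1 b2 disp (some d) n = 0 := by
  cases disp
  · simp [jumpProb, show n ≠ 0 by omega, show ¬(n < d) by omega, show n ≠ d by omega]
  · simp [jumpProb, show ¬(n < d) by omega, show n ≠ d by omega]

lemma stepK_one_len {disp : Bool} {a : ℤ} {v : List ℤ} (h : v.length ≠ 1) :
    stepK b1 b2 disp [a] v = 0 := by
  cases v with
  | nil => exact stepK_nil_right
  | cons v1 vt =>
    cases vt with
    | nil => simp at h
    | cons v2 vs => rw [stepK_cons, stepK_nil_left, mul_zero]

-- support of the one-point LHS summand
lemma lhs_support (hq0 : q ≠ 0) :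
    ∀ {x : List ℤ} {disp : Bool} {z : List ℤ}, x.Chain' (· < ·) → (∀ a ∈ x, a < c) →
      stepK b1 b2 disp x z * Hfun q z [c] ≠ 0 → z ∈ FS c x := by
  intro x
  induction x with
  | nil =>
    intro disp z _ _ h
    cases z with
    | nil => simp [FS]
    | cons z1 zr => rw [stepK_nil_left, zero_mul] at h; exact absurd rfl h
  | cons a rest ih =>
    intro disp z hx hb h
    cases z with
    | nil => rw [stepK_nil_right, zero_mul] at h; exact absurd rfl h
    | cons z1 zr =>
      rw [stepK_cons, mul_assoc] at h
      obtain ⟨hj, hrest⟩ := mul_ne_zero_iff.mp h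
      have hac : a < c := hb a (by simp)
      rw [show FS c (a :: rest) = ((Finset.Icc a c) ×ˢ (FS c rest)).image
        (fun p => p.1 :: p.2) from rfl]
      rw [Finset.mem_image]
      refine ⟨(z1, zr), Finset.mem_product.mpr ⟨?_, ?_⟩, rfl⟩
      · -- z1 ∈ Icc a c
        rw [Finset.mem_Icc]
        cases rest with
        | nil =>
          have hj' : jumpProb b1 b2 disp none (z1 - a) ≠ 0 := by simpa using hj
          have hzr : zr = [] := by
            by_contra hne
            cases zr with
            | nil => exact hne rfl
            | cons w ws =>
              rw [stepK_nil_left, zero_mul] at hrest; exact absurd rfl hrest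
          subst hzr
          have hcz : c = z1 := by
            by_contra hne
            rw [Hfun_singleton, if_neg hne, mul_zero] at hrest
            exact absurd rfl hrest
          rcases jumpProb_none_cases hj' with h0 | h1 <;> omega
        | cons r1 rs =>
          have hr1c : r1 < c := hb r1 (by simp)
          have hr1a : a < r1 := (List.isChain_cons_cons.mp hx).1
          have hj' : jumpProb b1 b2 disp (some (r1 - a)) (z1 - a) ≠ 0 := by simpa using hj
          rcases jumpProb_some_cases hj' with h0 | h1 | h2 <;> omega
      · -- zr ∈ FS c rest
        cases rest with
        | nil =>
          have hzr : zr = [] := by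
            by_contra hne
            cases zr with
            | nil => exact hne rfl
            | cons w ws =>
              rw [stepK_nil_left, zero_mul] at hrest; exact absurd rfl hrest
          subst hzr; simp [FS]
        | cons r1 rs =>
          have hr1c : r1 < c := hb r1 (by simp)
          have hr1a : a < r1 := (List.isChain_cons_cons.mp hx).1
          have hj' : jumpProb b1 b2 disp (some (r1 - a)) (z1 - a) ≠ 0 := by simpa using hj
          have hz1c : z1 < c := by
            rcases jumpProb_some_cases hj' with h0 | h1 | h2 <;> omega
          rw [Hfun_cons_lt hq0 hz1c] at hrest
          have hs := (mul_ne_zero_iff.mp hrest).1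
          have hH := (mul_ne_zero_iff.mp (mul_ne_zero_iff.mp hrest).2).2
          exact ih hx.tail (fun b hb' => hb b (by simp [hb']))
            (mul_ne_zero_iff.mpr ⟨hs, hH⟩)

lemma jumpProb_zero_val {disp : Bool} {d : ℤ} (hd : 1 ≤ d) :
    jumpProb b1 b2 disp (some d) 0 = if disp then 0 else b1 := by
  cases disp
  · simp [jumpProb_false_zero]
  · simp [jumpProb_true_some_zero hd]

lemma geom_shift (a r1 : ℤ) (h : a < r1) :
    ∑ z1 ∈ Finset.Icc (a+1) (r1-1), (1 - b2) * b2 ^ ((z1 - a - 1).toNat)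
      = 1 - b2 ^ ((r1 - a - 1).toNat) := by
  rw [show Finset.Icc (a+1) (r1-1) =
      Finset.map (addLeftEmbedding a) (Finset.Icc 1 (r1 - a - 1)) by
    rw [Finset.map_add_left_Icc]; congr 1 <;> ring]
  rw [Finset.sum_map]
  rw [Finset.sum_congr rfl (fun n _ => by
    rw [show addLeftEmbedding a n = a + n from rfl, show a + n - a - 1 = n - 1 by ring])]
  rw [show (r1 - a - 1 : ℤ) = ((r1 - a - 1).toNat : ℤ) by omega]
  exact geom_aux _

lemma Gval (hb1 : 0 < b1) (hb1' : b1 < 1) (hb2 : 0 < b2) (hb2' : b2 < 1)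
    (hq : q = b1 / b2) :
    ∀ (x : List ℤ), x.Chain' (· < ·) → (∀ a ∈ x, a < c) → ∀ disp : Bool,
      ∑' z : List ℤ, stepK b1 b2 disp x z * Hfun q z [c]
        = (1 - b2) * Df b1 b2 q c disp x := by
  have hq0 : q ≠ 0 := by rw [hq]; positivity
  intro x
  induction x with
  | nil =>
    intro _ _ disp
    have hzero : ∀ z : List ℤ, stepK b1 b2 disp [] z * Hfun q z [c] = 0 := by
      intro z
      cases z with
      | nil => rw [stepK_nil_nil, one_mul, Hfun_nil_single]
      | cons z1 zr => rw [stepK_nil_left, zero_mul]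
    calc ∑' z : List ℤ, stepK b1 b2 disp [] z * Hfun q z [c]
        = ∑' _ : List ℤ, (0:ℝ) := tsum_congr hzero
      _ = 0 := tsum_zero
      _ = (1 - b2) * Df b1 b2 q c disp [] := by simp [Df]
  | cons a rest ih =>
    intro hx hb disp
    have hac : a < c := hb a (by simp)
    have hsupp : ∀ z ∉ FS c (a :: rest),
        stepK b1 b2 disp (a :: rest) z * Hfun q z [c] = 0 := by
      intro z hz
      by_contra hne
      exact hz (lhs_support hq0 hx hb hne)
    rw [tsum_eq_sum hsupp]
    rw [show FS c (a :: rest) = ((Finset.Icc a c) ×ˢ (FS c rest)).image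
      (fun p => p.1 :: p.2) from rfl]
    rw [Finset.sum_image (by
      rintro ⟨p1, p2⟩ _ ⟨q1, q2⟩ _ hpq
      simp only [List.cons.injEq] at hpq
      simp [hpq.1, hpq.2])]
    rw [Finset.sum_product]
    cases rest with
    | nil =>
      simp only [FS, Finset.sum_singleton]
      rw [Finset.sum_eq_single_of_mem c (Finset.mem_Icc.mpr ⟨by omega, le_refl c⟩)
        (fun z1 _ hne => by
          rw [stepK_cons, stepK_nil_nil, mul_one, Hfun_singleton,
            if_neg (Ne.symm hne), mul_zero])]
      rw [stepK_cons, stepK_nil_nil, mul_one, Hfun_singleton, if_pos rfl]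
      simp only [List.head?_nil, Option.map_none]
      rw [jumpProb_none_ge (by omega : 1 ≤ c - a)]
      simp only [Df, Sf]
      cases disp <;> simp <;> ring
    | cons r1 rs =>
      have hr1a : a < r1 := (List.isChain_cons_cons.mp hx).1
      have hr1c : r1 < c := hb r1 (by simp)
      have hd : 1 ≤ r1 - a := by omega
      have htl : ∀ b ∈ r1 :: rs, b < c := fun b hb' => hb b (by simp [hb'])
      have hG : ∀ dd : Bool,
          ∑ zr ∈ FS c (r1 :: rs), stepK b1 b2 dd (r1 :: rs) zr * Hfun q zr [c]
            = (1 - b2) * Df b1 b2 q c dd (r1 :: rs) := by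
        intro dd
        rw [← tsum_eq_sum (L := SummationFilter.unconditional _) (fun zr hzr => by
          by_contra hne
          exact hzr (lhs_support hq0 hx.tail htl hne))]
        exact ih hx.tail htl dd
      rw [← Finset.sum_subset (Finset.Icc_subset_Icc_right (by omega : r1 ≤ c))
        (fun z1 h1 h2 => Finset.sum_eq_zero (fun zr _ => by
          rw [Finset.mem_Icc] at h1 h2
          rw [stepK_cons]
          simp only [List.head?_cons, Option.map_some]
          rw [jumpProb_some_gt hd (by omega), zero_mul, zero_mul]))]
      have hinner : ∀ z1 ∈ Finset.Icc a r1,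
          (∑ zr ∈ FS c (r1 :: rs),
            stepK b1 b2 disp (a :: r1 :: rs) (z1 :: zr) * Hfun q (z1 :: zr) [c])
          = jumpProb b1 b2 disp (some (r1 - a)) (z1 - a) *
              (q⁻¹ * ((1 - b2) * Df b1 b2 q c (decide (r1 = z1)) (r1 :: rs))) := by
        intro z1 hz1
        have hz1c : z1 < c := by rw [Finset.mem_Icc] at hz1; omega
        have hpt : ∀ zr, stepK b1 b2 disp (a :: r1 :: rs) (z1 :: zr) * Hfun q (z1 :: zr) [c]
            = (jumpProb b1 b2 disp (some (r1 - a)) (z1 - a) * q⁻¹) *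
              (stepK b1 b2 (decide (r1 = z1)) (r1 :: rs) zr * Hfun q zr [c]) := by
          intro zr
          rw [stepK_cons, Hfun_cons_lt hq0 hz1c]
          simp only [List.head?_cons, Option.map_some, Option.some.injEq]
          ring
        rw [Finset.sum_congr rfl (fun zr _ => hpt zr), ← Finset.mul_sum, hG, mul_assoc]
      rw [Finset.sum_congr rfl hinner]
      have hsplit1 : Finset.Icc a r1 = insert r1 (Finset.Icc a (r1 - 1)) := by
        ext n; simp only [Finset.mem_Icc, Finset.mem_insert]; omega
      have hnot1 : r1 ∉ Finset.Icc a (r1 - 1) := by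
        simp only [Finset.mem_Icc]; omega
      have hsplit2 : Finset.Icc a (r1 - 1) = insert a (Finset.Icc (a + 1) (r1 - 1)) := by
        ext n; simp only [Finset.mem_Icc, Finset.mem_insert]; omega
      have hnot2 : a ∉ Finset.Icc (a + 1) (r1 - 1) := by
        simp only [Finset.mem_Icc]; omega
      rw [hsplit1, Finset.sum_insert hnot1, hsplit2, Finset.sum_insert hnot2]
      rw [show (decide (r1 = r1)) = true by simp]
      rw [jumpProb_some_top hd]
      rw [sub_self, jumpProb_zero_val hd,
        show (decide (r1 = a)) = false by simp [show r1 ≠ a by omega]]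
      have hmid : ∀ z1 ∈ Finset.Icc (a + 1) (r1 - 1),
          jumpProb b1 b2 disp (some (r1 - a)) (z1 - a) *
              (q⁻¹ * ((1 - b2) * Df b1 b2 q c (decide (r1 = z1)) (r1 :: rs)))
            = ((1 - b2) * b2 ^ ((z1 - a - 1).toNat)) *
              ((if disp = true then (1:ℝ) else 1 - b1) *
                (q⁻¹ * ((1 - b2) * Df b1 b2 q c false (r1 :: rs)))) := by
        intro z1 hz1
        rw [Finset.mem_Icc] at hz1
        rw [jumpProb_some_mid (by omega : 1 ≤ z1 - a) (by omega : z1 - a < r1 - a),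
          show (decide (r1 = z1)) = false by simp [show r1 ≠ z1 by omega]]
        ring
      rw [Finset.sum_congr rfl hmid, ← Finset.sum_mul, geom_shift a r1 hr1a]
      have hqinv : q⁻¹ = b2 / b1 := by rw [hq, inv_div]
      have hpw : b2 ^ ((c - a - 1).toNat)
          = b2 ^ ((r1 - a - 1).toNat) * b2 ^ ((c - r1 - 1).toNat) * b2 := by
        rw [show (c - a - 1).toNat = (r1 - a - 1).toNat + ((c - r1 - 1).toNat + 1) by omega,
          pow_add, pow_add, pow_one]
        ring
      simp only [Df, Sf]
      rw [hpw, hqinv]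
      have hb1ne : b1 ≠ 0 := by positivity
      cases disp <;> simp only [Bool.false_eq_true, if_false, if_true] <;> field_simp <;> ring

lemma revK_single_eq {w1 : ℤ} : revK b1 b2 [c] [w1] = jumpProb b1 b2 false none (c - w1) := by
  unfold revK
  simp only [List.map_cons, List.map_nil, List.reverse_cons, List.reverse_nil, List.nil_append]
  rw [stepK_cons, stepK_nil_nil, mul_one]
  simp only [List.head?_nil, Option.map_none]
  rw [show -w1 - -c = c - w1 by ring]

lemma revK_not_single {w : List ℤ} (h : w.length ≠ 1) : revK b1 b2 [c] w = 0 := by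
  unfold revK
  have hc : (([c].map fun a => -a).reverse) = [-c] := by simp
  rw [hc]
  exact stepK_one_len (by simpa using h)

lemma Rsum (hb1 : 0 < b1) (hb1' : b1 < 1) (hb2 : 0 < b2) (hb2' : b2 < 1)
    (hq : q = b1 / b2) :
    ∀ (x : List ℤ), x.Chain' (· < ·) → (∀ a ∈ x, a < c) →
      ∑ a ∈ x.toFinset, jumpProb b1 b2 false none (c - a) * Hfun q x [a]
        = (1 - b1) * ((1 - b2) * Sf q b2 c x) := by
  have hq0 : q ≠ 0 := by rw [hq]; positivity
  intro x
  induction x with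
  | nil => simp [Sf]
  | cons a0 r ih =>
    intro hx hb
    have ha0c : a0 < c := hb a0 (by simp)
    have hpw := List.isChain_iff_pairwise.mp hx
    obtain ⟨hlt, hpw'⟩ := List.pairwise_cons.mp hpw
    have ha0r : a0 ∉ r := fun hmem => by have := hlt a0 hmem; omega
    rw [List.toFinset_cons, Finset.sum_insert (by simp [ha0r])]
    have hhead : Hfun q (a0 :: r) [a0] = q⁻¹ := by
      rw [Hfun_single, if_pos (by simp : a0 ∈ a0 :: r)]
      have hcr : r.countP (fun xj => decide (xj ≤ a0)) = 0 := by
        rw [List.countP_eq_zero]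
        intro b hbm
        simpa using (by have := hlt b hbm; omega : ¬ b ≤ a0)
      have hcount : (a0 :: r).countP (fun xj => decide (xj ≤ a0)) = 1 := by
        rw [List.countP_cons, hcr]; simp
      rw [hcount]
      norm_num
    have htail : ∀ a ∈ r.toFinset,
        jumpProb b1 b2 false none (c - a) * Hfun q (a0 :: r) [a]
          = q⁻¹ * (jumpProb b1 b2 false none (c - a) * Hfun q r [a]) := by
      intro a ha
      rw [Hfun_cons_lt hq0 (hlt a (List.mem_toFinset.mp ha))]
      ring
    rw [Finset.sum_congr rfl htail, ← Finset.mul_sum,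
      ih hx.tail (fun b hb' => hb b (by simp [hb']))]
    rw [hhead, jumpProb_none_ge (show 1 ≤ c - a0 by omega)]
    simp only [Sf, Bool.false_eq_true, if_false]
    ring

lemma Rval (hb1 : 0 < b1) (hb1' : b1 < 1) (hb2 : 0 < b2) (hb2' : b2 < 1)
    (hq : q = b1 / b2) (x : List ℤ) (hx : x.Chain' (· < ·)) (hbnd : ∀ a ∈ x, a < c) :
    ∑' w : List ℤ, revK b1 b2 [c] w * Hfun q x w
      = (1 - b1) * ((1 - b2) * Sf q b2 c x) := by
  have hq0 : q ≠ 0 := by rw [hq]; positivity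
  have hsupp : ∀ w ∉ x.toFinset.image (fun a => [a]),
      revK b1 b2 [c] w * Hfun q x w = 0 := by
    intro w hw
    by_contra hne
    obtain ⟨hr, hH⟩ := mul_ne_zero_iff.mp hne
    have hw1 : ∃ w1, w = [w1] := by
      cases w with
      | nil => exact absurd (revK_not_single (by simp)) hr
      | cons w1 t =>
        cases t with
        | nil => exact ⟨w1, rfl⟩
        | cons w2 ts => exact absurd (revK_not_single (by simp)) hr
    obtain ⟨w1, rfl⟩ := hw1
    have hmem : w1 ∈ x := Hfun_mem hH w1 (by simp)
    exact hw (Finset.mem_image.mpr ⟨w1, List.mem_toFinset.mpr hmem, rfl⟩)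
  rw [tsum_eq_sum hsupp, Finset.sum_image (by intro a _ b _ h; simpa using h)]
  rw [Finset.sum_congr rfl (fun a _ => by rw [revK_single_eq])]
  exact Rsum hb1 hb1' hb2 hb2' hq x hx hbnd

end dev2

/-- One-step duality when all particles of the configuration `x` lie strictly to the
left of every `y_i` (in particular to the left of `y_k`): with `q = b1/b2` and the
Schütz functional `H̃`, `E^x[H̃(x(1), y)] = E^y[H̃(x, y(1))]`; moreover, if `x` has
fewer than `k` particles, both sides equal `0`. -/
theorem s6v_one_step_duality_left_of_yk
    (b1 b2 q : ℝ) (hb1 : 0 < b1) (hb1' : b1 < 1) (hb2 : 0 < b2) (hb2' : b2 < 1)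
    (hq : q = b1 / b2) (k : ℕ) (hk : 1 ≤ k)
    (x y : List ℤ) (hx : x.Chain' (· < ·)) (hy : y.Chain' (· > ·))
    (hylen : y.length = k)
    (hleft : ∀ a ∈ x, ∀ c ∈ y, a < c) :
    (∑' z : List ℤ, stepK b1 b2 false x z * Hfun q z y
        = ∑' w : List ℤ, revK b1 b2 y w * Hfun q x w) ∧
    (x.length < k →
      (∑' z : List ℤ, stepK b1 b2 false x z * Hfun q z y) = 0 ∧
      (∑' w : List ℤ, revK b1 b2 y w * Hfun q x w) = 0) := by
  rcases Nat.lt_or_ge k 2 with hk1 | hk2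
  · have hk1' : k = 1 := by omega
    subst hk1'
    obtain ⟨c, rfl⟩ : ∃ c, y = [c] := by
      cases y with
      | nil => simp at hylen
      | cons c t =>
        cases t with
        | nil => exact ⟨c, rfl⟩
        | cons _ _ => simp at hylen
    have hbnd : ∀ a ∈ x, a < c := fun a ha => hleft a ha c (by simp)
    have hL := Gval (c := c) hb1 hb1' hb2 hb2' hq x hx hbnd false
    have hR := Rval (c := c) hb1 hb1' hb2 hb2' hq x hx hbnd
    rw [hL, hR, Df_false]
    constructor
    · ring
    · intro hlen
      have hx0 : x = [] := List.length_eq_zero_iff.mp (by omega)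
      subst hx0
      constructor <;> simp [Sf]
  · have h2 : 2 ≤ y.length := by omega
    have hLz : ∑' z : List ℤ, stepK b1 b2 false x z * Hfun q z y = 0 := by
      rw [tsum_congr (lhs_zero_of_two_le hy h2 hleft)]
      exact tsum_zero
    have hRz : ∑' w : List ℤ, revK b1 b2 y w * Hfun q x w = 0 := by
      rw [tsum_congr (rhs_zero_of_two_le h2 hleft)]
      exact tsum_zero
    exact ⟨by rw [hLz, hRz], fun _ => ⟨hLz, hRz⟩⟩
end

section
/- Let 0 < b1, b2 < 1 and q = b1/b2, and let x = (x_1 < ... < x_ℓ) be an ℓ-particle location configuration of the stochastic six vertex model and y = (y_1 > ... > y_k) a k-particle configuration with x_1 < y_k. Denote by x'(t) the (ℓ-1)-particle S6V process started from (x_2 < ... < x_ℓ). Then E^x[ H̃(x(1), y) · 1_{x_1(1) = x_1} ] = q^{-k} b1 · E^{x'}[ H̃(x'(1), y) ], where H̃(x, y) = Π_{i=1}^k 1_{y_i ∈ {x_1,...,x_ℓ}} q^{-#{j : x_j ≤ y_i}}. -/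
lemma jumpProb_zero (b1 b2 : ℝ) (g : Option ℤ) : jumpProb b1 b2 false g 0 = b1 := by
  cases g <;> simp [jumpProb]

/-- Lemma 2.2, equation (2.4) of the paper: if `x = (x1 < x2 < ... < xl)`,
`y = (y_1 > ... > y_k)` and `x1 < y_k`, then
`E^x[ H̃(x(1), y) 1_{x_1(1) = x_1} ] = q^{-k} b1 E^{x'}[ H̃(x'(1), y) ]`,
where `x' = (x2 < ... < xl)` and `q = b1/b2`. -/
theorem s6v_frozen_leftmost_particle_identity
    (b1 b2 q : ℝ) (hb1 : 0 < b1) (hb1' : b1 < 1) (hb2 : 0 < b2) (hb2' : b2 < 1)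
    (hq : q = b1 / b2) (k : ℕ) (hk : 1 ≤ k)
    (x1 : ℤ) (xs y : List ℤ) (hx : (x1 :: xs).Chain' (· < ·))
    (hy : y.Chain' (· > ·)) (hylen : y.length = k)
    (hx1 : ∀ c ∈ y, x1 < c) :
    ∑' z : List ℤ,
        stepK b1 b2 false (x1 :: xs) z *
          (if z.head? = some x1 then Hfun q z y else 0)
      = q ^ (-(k : ℤ)) * b1 * ∑' z : List ℤ, stepK b1 b2 false xs z * Hfun q z y := by
  have hq0 : q ≠ 0 := by rw [hq]; positivity
  have hxh : (decide (xs.head? = some x1)) = false := by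
    cases xs with
    | nil => simp
    | cons a t =>
      have : x1 < a := (List.isChain_cons_cons.mp hx).1
      simp [this.ne']
  have hH : ∀ zr : List ℤ, Hfun q (x1 :: zr) y = q ^ (-(k : ℤ)) * Hfun q zr y := by
    intro zr
    unfold Hfun
    have hmapeq : (y.map fun yi =>
        (if yi ∈ x1 :: zr then (1 : ℝ) else 0) *
          q ^ (-(((x1 :: zr).countP fun xj => decide (xj ≤ yi)) : ℤ)))
        = y.map fun yi => q ^ (-1 : ℤ) *
          ((if yi ∈ zr then (1 : ℝ) else 0) *
            q ^ (-((zr.countP fun xj => decide (xj ≤ yi)) : ℤ))) := by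
      apply List.map_congr_left
      intro yi hyi
      have hlt := hx1 yi hyi
      have hmem : (yi ∈ x1 :: zr) ↔ (yi ∈ zr) := by
        simp [List.mem_cons, hlt.ne']
      have hcount : ((x1 :: zr).countP fun xj => decide (xj ≤ yi))
          = (zr.countP fun xj => decide (xj ≤ yi)) + 1 := by
        rw [List.countP_cons]
        simp [hlt.le]
      rw [if_congr hmem rfl rfl, hcount]
      push_cast
      rw [neg_add, zpow_add₀ hq0]
      ring
    rw [hmapeq, List.prod_map_mul]
    have h1 : (y.map fun _ => q ^ (-1 : ℤ)).prod = q ^ (-(k : ℤ)) := by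
      rw [List.map_const', List.prod_replicate, hylen]
      rw [zpow_neg, zpow_one, zpow_neg, zpow_natCast, inv_pow]
    rw [← h1]
  have hinj : Function.Injective (fun zr : List ℤ => x1 :: zr) := by
    intro a b h
    simpa using h
  have hsupp : Function.support (fun z : List ℤ =>
      stepK b1 b2 false (x1 :: xs) z * (if z.head? = some x1 then Hfun q z y else 0))
      ⊆ Set.range (fun zr : List ℤ => x1 :: zr) := by
    intro z hz
    rcases z with _ | ⟨a, t⟩
    · exfalso; apply hz; simp
    · by_cases ha : a = x1
      · exact ⟨t, by rw [ha]⟩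
      · exfalso; apply hz; simp [ha]
  rw [← hinj.tsum_eq hsupp]
  have hterm : ∀ zr : List ℤ,
      (fun z : List ℤ => stepK b1 b2 false (x1 :: xs) z *
        (if z.head? = some x1 then Hfun q z y else 0)) ((fun zr : List ℤ => x1 :: zr) zr)
      = q ^ (-(k : ℤ)) * b1 * (stepK b1 b2 false xs zr * Hfun q zr y) := by
    intro zr
    simp only [stepK, List.head?_cons, if_pos rfl, sub_self, jumpProb_zero, hxh, hH, if_true]
    ring
  rw [tsum_congr hterm, tsum_mul_left]
end

section
/- Let 0 < b1, b2 < 1, q = b1/b2, k ≥ 1, and consider the two-particle configuration x = (x_1 < x_2) with y = (y_1 > ... > y_k) satisfying y_k > x_2. Then for the one-step update of the two-particle S6V location process, E^x[ H̃(x(1), y) ] = q^{-k} L_1 + q^{-(k-1)} b2^{x_2 - x_1} (L_1 - q^{-k} L_2), where L_1 = E^{(x_2)}[ H̃(x_2(1), y) ] is the corresponding expectation for the single particle started at x_2 and L_2 = H̃(∅, y) = 0 is the expectation for the empty configuration, i.e. E^x[ H̃(x(1), y) ] = (q^{-k} + q^{-(k-1)} b2^{x_2 - x_1}) L_1. -/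
lemma Hfun_eq_zero {q : ℝ} {z y : List ℤ} {c : ℤ} (hc : c ∈ y) (hz : c ∉ z) :
    Hfun q z y = 0 := by
  unfold Hfun
  apply List.prod_eq_zero
  refine List.mem_map.2 ⟨c, hc, ?_⟩
  simp [hz]

lemma Hfun_pair (q : ℝ) {z1 y1 : ℤ} (h : z1 ≤ y1) : Hfun q [z1, y1] [y1] = q ^ (-2 : ℤ) := by
  simp [Hfun, h, List.countP_cons]

lemma Hfun_single_s18 (q : ℝ) (y1 : ℤ) : Hfun q [y1] [y1] = q ^ (-1 : ℤ) := by
  simp [Hfun, List.countP_cons]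

lemma jumpProb_some_zero {b1 b2 : ℝ} {disp : Bool} {d n : ℤ} (h1 : n ≠ 0)
    (h2 : ¬(1 ≤ n ∧ n < d)) (h3 : n ≠ d) : jumpProb b1 b2 disp (some d) n = 0 := by
  cases disp <;> simp [jumpProb, h1, h2, h3]

lemma jp_stay (b1 b2 : ℝ) (d : ℤ) : jumpProb b1 b2 false (some d) 0 = b1 := by
  simp [jumpProb]

lemma jp_mid (b1 b2 : ℝ) {d n : ℤ} (h : 1 ≤ n) (h2 : n < d) :
    jumpProb b1 b2 false (some d) n = (1-b1) * (1-b2) * b2 ^ (n-1).toNat := by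
  simp [jumpProb, h, h2, show n ≠ 0 by omega]

lemma jp_top (b1 b2 : ℝ) {d : ℤ} (h : 1 ≤ d) :
    jumpProb b1 b2 false (some d) d = (1-b1) * b2 ^ (d-1).toNat := by
  simp [jumpProb, show ¬ (d < d) by omega, show d ≠ 0 by omega]

lemma jp_free_false (b1 b2 : ℝ) {n : ℤ} (h : 1 ≤ n) :
    jumpProb b1 b2 false none n = (1-b1) * (1-b2) * b2 ^ (n-1).toNat := by
  simp [jumpProb, h, show n ≠ 0 by omega]

lemma jp_free_true (b1 b2 : ℝ) {n : ℤ} (h : 1 ≤ n) :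
    jumpProb b1 b2 true none n = (1-b2) * b2 ^ (n-1).toNat := by
  simp [jumpProb, h]

lemma term0 (b1 b2 q : ℝ) {x1 x2 y1 : ℤ} (h1 : x1 < x2) (h2 : x2 < y1) :
    stepK b1 b2 false [x1, x2] [x1, y1] * Hfun q [x1, y1] [y1]
      = b1 * ((1-b1) * ((1-b2) * b2 ^ (y1-x2-1).toNat)) * q ^ (-2 : ℤ) := by
  have hne : (x2 = x1) = False := by simp; omega
  simp only [stepK, List.head?_cons, List.head?_nil, Option.map_some, Option.map_none,
    Option.some.injEq, hne, decide_false, sub_self, mul_one]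
  rw [jp_stay, jp_free_false b1 b2 (show (1:ℤ) ≤ y1 - x2 by omega),
    Hfun_pair q (show x1 ≤ y1 by omega)]
  ring

lemma termMid (b1 b2 q : ℝ) {x1 x2 y1 z1 : ℤ} (h1 : x1 < z1) (h2 : z1 < x2) (h3 : x2 < y1) :
    stepK b1 b2 false [x1, x2] [z1, y1] * Hfun q [z1, y1] [y1]
      = (1-b1) * (1-b2) * b2 ^ (z1-x1-1).toNat
          * ((1-b1) * ((1-b2) * b2 ^ (y1-x2-1).toNat)) * q ^ (-2 : ℤ) := by
  have hne : (x2 = z1) = False := by simp; omega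
  simp only [stepK, List.head?_cons, List.head?_nil, Option.map_some, Option.map_none,
    Option.some.injEq, hne, decide_false, mul_one]
  rw [jp_mid b1 b2 (show (1:ℤ) ≤ z1 - x1 by omega) (show z1 - x1 < x2 - x1 by omega),
    jp_free_false b1 b2 (show (1:ℤ) ≤ y1 - x2 by omega),
    Hfun_pair q (show z1 ≤ y1 by omega)]
  ring

lemma termTop (b1 b2 q : ℝ) {x1 x2 y1 : ℤ} (h1 : x1 < x2) (h2 : x2 < y1) :
    stepK b1 b2 false [x1, x2] [x2, y1] * Hfun q [x2, y1] [y1]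
      = (1-b1) * b2 ^ (x2-x1-1).toNat * ((1-b2) * b2 ^ (y1-x2-1).toNat) * q ^ (-2 : ℤ) := by
  simp only [stepK, List.head?_cons, List.head?_nil, Option.map_some, Option.map_none,
    Option.some.injEq, decide_true, mul_one]
  rw [show x2 - x1 = (x2 - x1) from rfl,
    jp_top b1 b2 (show (1:ℤ) ≤ x2 - x1 by omega),
    jp_free_true b1 b2 (show (1:ℤ) ≤ y1 - x2 by omega),
    Hfun_pair q (show x2 ≤ y1 by omega)]

/-- Decomposition identity (Case (2c) specialized to two particles): for
`x = (x1 < x2)`, `y = (y_1 > ... > y_k)` with `y_k > x2` and `q = b1/b2`,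
`E^x[H̃(x(1), y)] = q^{-k} L1 + q^{-(k-1)} b2^{x2-x1} (L1 - q^{-k} L2)`
where `L1 = E^{(x2)}[H̃(·(1), y)]` is the one-particle expectation started at `x2` and
`L2 = H̃(∅, y)` is the expectation for the empty configuration; equivalently
`E^x[H̃(x(1), y)] = (q^{-k} + q^{-(k-1)} b2^{x2-x1}) L1`. -/
theorem s6v_two_particle_decomposition
    (b1 b2 q : ℝ) (hb1 : 0 < b1) (hb1' : b1 < 1) (hb2 : 0 < b2) (hb2' : b2 < 1)
    (hq : q = b1 / b2) (k : ℕ) (hk : 1 ≤ k)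
    (x1 x2 : ℤ) (hx : x1 < x2)
    (y : List ℤ) (hy : y.Chain' (· > ·)) (hylen : y.length = k)
    (hyk : ∀ c ∈ y, x2 < c) :
    (∑' z : List ℤ, stepK b1 b2 false [x1, x2] z * Hfun q z y
        = q ^ (-(k : ℤ)) * (∑' z : List ℤ, stepK b1 b2 false [x2] z * Hfun q z y)
          + q ^ (-((k : ℤ) - 1)) * b2 ^ (x2 - x1).toNat *
            ((∑' z : List ℤ, stepK b1 b2 false [x2] z * Hfun q z y)
              - q ^ (-(k : ℤ)) *
                (∑' z : List ℤ, stepK b1 b2 false [] z * Hfun q z y))) ∧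
    (∑' z : List ℤ, stepK b1 b2 false [x1, x2] z * Hfun q z y
        = (q ^ (-(k : ℤ)) + q ^ (-((k : ℤ) - 1)) * b2 ^ (x2 - x1).toNat) *
          (∑' z : List ℤ, stepK b1 b2 false [x2] z * Hfun q z y)) := by
  have hb2ne : b2 ≠ 0 := ne_of_gt hb2
  have hb1ne : b1 ≠ 0 := ne_of_gt hb1
  have hL2 : (∑' z : List ℤ, stepK b1 b2 false [] z * Hfun q z y) = 0 := by
    have h0 : ∀ z : List ℤ, stepK b1 b2 false [] z * Hfun q z y = 0 := by
      intro z
      cases z with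
      | nil =>
          obtain ⟨c, t, rfl⟩ : ∃ c t, y = c :: t := by
            cases y with
            | nil => simp at hylen; omega
            | cons c t => exact ⟨c, t, rfl⟩
          rw [Hfun_eq_zero (List.mem_cons_self (a := c) (l := t)) (List.not_mem_nil (a := c)), mul_zero]
      | cons a t => simp [stepK]
    calc (∑' z : List ℤ, stepK b1 b2 false [] z * Hfun q z y)
        = ∑' _ : List ℤ, (0:ℝ) := tsum_congr h0
      _ = 0 := tsum_zero
  suffices h2 : (∑' z : List ℤ, stepK b1 b2 false [x1, x2] z * Hfun q z y
        = (q ^ (-(k : ℤ)) + q ^ (-((k : ℤ) - 1)) * b2 ^ (x2 - x1).toNat) *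
          (∑' z : List ℤ, stepK b1 b2 false [x2] z * Hfun q z y)) by
    refine ⟨?_, h2⟩
    rw [h2, hL2]
    ring
  match k, hk, hylen with
  | 1, _, hylen =>
    -- main case k = 1
    obtain ⟨y1, rfl⟩ := List.length_eq_one_iff.mp hylen
    have hy1 : x2 < y1 := hyk y1 (by simp)
    obtain ⟨e, he⟩ : ∃ e : ℕ, (x2 - x1).toNat = e + 1 := ⟨(x2 - x1).toNat - 1, by omega⟩
    have hL1 : (∑' z : List ℤ, stepK b1 b2 false [x2] z * Hfun q z [y1])
        = (1-b1) * ((1-b2) * b2 ^ (y1-x2-1).toNat) * q ^ (-1 : ℤ) := by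
      rw [tsum_eq_single [y1] ?_]
      · have hstep : stepK b1 b2 false [x2] [y1] = jumpProb b1 b2 false none (y1 - x2) := by
          simp [stepK]
        rw [hstep, jp_free_false b1 b2 (show (1:ℤ) ≤ y1 - x2 by omega), Hfun_single_s18]
        ring
      · intro z hz
        match z with
        | [] => simp [stepK]
        | [z0] =>
            have : y1 ∉ [z0] := by
              simp only [List.mem_singleton]
              intro h; exact hz (by rw [h])
            rw [Hfun_eq_zero (show y1 ∈ [y1] by simp) this, mul_zero]
        | z0 :: z1 :: zr => simp [stepK]
    have key : (∑' z : List ℤ, stepK b1 b2 false [x1, x2] z * Hfun q z [y1])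
        = ∑ n ∈ Finset.range ((x2 - x1).toNat + 1),
            stepK b1 b2 false [x1, x2] [x1 + (n:ℤ), y1] * Hfun q [x1 + (n:ℤ), y1] [y1] := by
      rw [tsum_eq_sum
        (s := (Finset.range ((x2 - x1).toNat + 1)).image (fun n : ℕ => [x1 + (n:ℤ), y1]))
        ?_, Finset.sum_image ?_]
      · intro a _ b _ h
        simp only [List.cons.injEq, and_true] at h
        omega
      · intro z hz
        match z with
        | [] => simp [stepK]
        | [z0] => simp [stepK]
        | [z1, z2] =>
            by_cases h2 : z2 = y1
            · subst h2
              have hz1 : z1 < x1 ∨ x2 < z1 := by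
                by_contra hcon
                push_neg at hcon
                refine hz (Finset.mem_image.2 ⟨(z1 - x1).toNat, ?_, ?_⟩)
                · simp only [Finset.mem_range]; omega
                · congr 1; omega
              have h0 : jumpProb b1 b2 false (some (x2 - x1)) (z1 - x1) = 0 :=
                jumpProb_some_zero (by omega) (by omega) (by omega)
              simp [stepK, h0]
            · by_cases h1 : y1 = z1
              · have h0 : jumpProb b1 b2 false (some (x2 - x1)) (z1 - x1) = 0 :=
                  jumpProb_some_zero (by omega) (by omega) (by omega)
                simp [stepK, h0]
              · have : y1 ∉ [z1, z2] := by
                  simp only [List.mem_cons, List.mem_singleton, List.not_mem_nil]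
                  push_neg
                  exact ⟨h1, fun h => h2 h.symm, by simp⟩
                rw [Hfun_eq_zero (show y1 ∈ [y1] by simp) this, mul_zero]
        | z1 :: z2 :: z3 :: zr => simp [stepK]
    have hsum : (∑ n ∈ Finset.range ((x2 - x1).toNat + 1),
            stepK b1 b2 false [x1, x2] [x1 + (n:ℤ), y1] * Hfun q [x1 + (n:ℤ), y1] [y1])
        = b1 * ((1-b1) * ((1-b2) * b2 ^ (y1-x2-1).toNat)) * q ^ (-2 : ℤ)
          + (∑ i ∈ Finset.range e, (1-b1) * (1-b2) * b2 ^ i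
              * ((1-b1) * ((1-b2) * b2 ^ (y1-x2-1).toNat)) * q ^ (-2 : ℤ))
          + (1-b1) * b2 ^ e * ((1-b2) * b2 ^ (y1-x2-1).toNat) * q ^ (-2 : ℤ) := by
      rw [he, Finset.sum_range_succ, Finset.sum_range_succ']
      have hFe : stepK b1 b2 false [x1, x2] [x1 + ((e+1 : ℕ):ℤ), y1]
            * Hfun q [x1 + ((e+1 : ℕ):ℤ), y1] [y1]
          = (1-b1) * b2 ^ e * ((1-b2) * b2 ^ (y1-x2-1).toNat) * q ^ (-2 : ℤ) := by
        rw [show x1 + ((e+1 : ℕ):ℤ) = x2 by omega, termTop b1 b2 q hx hy1,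
          show (x2 - x1 - 1).toNat = e by omega]
      have hF0 : stepK b1 b2 false [x1, x2] [x1 + ((0 : ℕ):ℤ), y1]
            * Hfun q [x1 + ((0 : ℕ):ℤ), y1] [y1]
          = b1 * ((1-b1) * ((1-b2) * b2 ^ (y1-x2-1).toNat)) * q ^ (-2 : ℤ) := by
        rw [show x1 + ((0 : ℕ):ℤ) = x1 by simp, term0 b1 b2 q hx hy1]
      have hFi : ∀ i ∈ Finset.range e,
          stepK b1 b2 false [x1, x2] [x1 + ((i+1 : ℕ):ℤ), y1]
              * Hfun q [x1 + ((i+1 : ℕ):ℤ), y1] [y1]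
            = (1-b1) * (1-b2) * b2 ^ i
                * ((1-b1) * ((1-b2) * b2 ^ (y1-x2-1).toNat)) * q ^ (-2 : ℤ) := by
        intro i hi
        rw [Finset.mem_range] at hi
        rw [termMid b1 b2 q (show x1 < x1 + ((i+1 : ℕ):ℤ) by omega)
            (show x1 + ((i+1 : ℕ):ℤ) < x2 by omega) hy1,
          show (x1 + ((i+1 : ℕ):ℤ) - x1 - 1).toNat = i by omega]
      rw [hFe, hF0, Finset.sum_congr rfl hFi]
      ring
    have hb2one : (b2:ℝ) ≠ 1 := ne_of_lt hb2'
    have h1 : b2 - 1 ≠ 0 := sub_ne_zero.mpr hb2one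
    have hgeom : (∑ i ∈ Finset.range e, (b2:ℝ) ^ i) = (b2 ^ e - 1) / (b2 - 1) :=
      geom_sum_eq hb2one e
    have hS : (∑ i ∈ Finset.range e, (1-b1) * (1-b2) * b2 ^ i
              * ((1-b1) * ((1-b2) * b2 ^ (y1-x2-1).toNat)) * q ^ (-2 : ℤ))
        = (1-b1) * (1 - b2 ^ e)
            * ((1-b1) * ((1-b2) * b2 ^ (y1-x2-1).toNat)) * q ^ (-2 : ℤ) := by
      calc (∑ i ∈ Finset.range e, (1-b1) * (1-b2) * b2 ^ i
              * ((1-b1) * ((1-b2) * b2 ^ (y1-x2-1).toNat)) * q ^ (-2 : ℤ))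
          = ∑ i ∈ Finset.range e, b2 ^ i *
              ((1-b1) * (1-b2) * ((1-b1) * ((1-b2) * b2 ^ (y1-x2-1).toNat)) * q ^ (-2 : ℤ)) :=
            Finset.sum_congr rfl fun i _ => by ring
        _ = ((b2 ^ e - 1) / (b2 - 1)) *
              ((1-b1) * (1-b2) * ((1-b1) * ((1-b2) * b2 ^ (y1-x2-1).toNat)) * q ^ (-2 : ℤ)) := by
            rw [← Finset.sum_mul, hgeom]
        _ = (1-b1) * (1 - b2 ^ e)
              * ((1-b1) * ((1-b2) * b2 ^ (y1-x2-1).toNat)) * q ^ (-2 : ℤ) := by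
            have hgg : ((b2:ℝ) ^ e - 1) / (b2 - 1) * (1 - b2) = 1 - b2 ^ e := by
              field_simp; ring
            rw [← hgg]; ring
    have e2 : q ^ (-2 : ℤ) = (q ^ 2)⁻¹ := by rw [zpow_neg]; norm_num [zpow_ofNat]
    have e1 : q ^ (-1 : ℤ) = q⁻¹ := by rw [zpow_neg]; norm_num [zpow_ofNat]
    have ek : q ^ (-((1:ℕ) : ℤ)) = q⁻¹ := by norm_num
    have ek1 : q ^ (-(((1:ℕ) : ℤ) - 1)) = 1 := by norm_num
    rw [key, hsum, hL1, hS, ek, ek1, he, pow_succ, e2, e1, hq]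
    field_simp
    ring
  | (n+2), _, hylen =>
    -- k ≥ 2 : both sides vanish
    obtain ⟨a, b, t, rfl⟩ : ∃ a b t, y = a :: b :: t := by
      match y with
      | c :: e :: t => exact ⟨c, e, t, rfl⟩
    have hab : b < a := (List.isChain_cons_cons.mp hy).1
    have hax2 : x2 < a := hyk a (by simp)
    have hbx2 : x2 < b := hyk b (by simp)
    have hLHS : ∀ z : List ℤ, stepK b1 b2 false [x1, x2] z * Hfun q z (a :: b :: t) = 0 := by
      intro z
      match z with
      | [] => simp [stepK]
      | [z0] => simp [stepK]
      | [z1, z2] =>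
          by_cases hz1 : x2 < z1
          · have h0 : jumpProb b1 b2 false (some (x2 - x1)) (z1 - x1) = 0 :=
              jumpProb_some_zero (by omega) (by omega) (by omega)
            simp [stepK, h0]
          · push_neg at hz1
            by_cases ha : a = z2
            · have : b ∉ [z1, z2] := by
                simp only [List.mem_cons, List.mem_singleton, List.not_mem_nil]
                push_neg
                exact ⟨by omega, by omega, by simp⟩
              rw [Hfun_eq_zero (show b ∈ a :: b :: t by simp) this, mul_zero]
            · have : a ∉ [z1, z2] := by
                simp only [List.mem_cons, List.mem_singleton, List.not_mem_nil]
                push_neg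
                exact ⟨by omega, ha, by simp⟩
              rw [Hfun_eq_zero (show a ∈ a :: b :: t by simp) this, mul_zero]
      | z1 :: z2 :: z3 :: zr => simp [stepK]
    have hR : ∀ z : List ℤ, stepK b1 b2 false [x2] z * Hfun q z (a :: b :: t) = 0 := by
      intro z
      match z with
      | [] => simp [stepK]
      | [z0] =>
          by_cases ha : a = z0
          · have : b ∉ [z0] := by simp only [List.mem_singleton]; omega
            rw [Hfun_eq_zero (show b ∈ a :: b :: t by simp) this, mul_zero]
          · have : a ∉ [z0] := by simp only [List.mem_singleton]; exact ha
            rw [Hfun_eq_zero (show a ∈ a :: b :: t by simp) this, mul_zero]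
      | z0 :: z1 :: zr => simp [stepK]
    calc (∑' z : List ℤ, stepK b1 b2 false [x1, x2] z * Hfun q z (a :: b :: t))
        = ∑' _ : List ℤ, (0:ℝ) := tsum_congr hLHS
      _ = 0 := tsum_zero
      _ = (q ^ (-((n+2:ℕ) : ℤ)) + q ^ (-(((n+2:ℕ) : ℤ) - 1)) * b2 ^ (x2 - x1).toNat) *
          (∑' z : List ℤ, stepK b1 b2 false [x2] z * Hfun q z (a :: b :: t)) := by
        rw [show (∑' z : List ℤ, stepK b1 b2 false [x2] z * Hfun q z (a :: b :: t))
            = ∑' _ : List ℤ, (0:ℝ) from tsum_congr hR, tsum_zero, mul_zero]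
end
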